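/- Let A ⊆ B(X) be an abelian, unital, semisimple, strongly closed subalgebra of split strict multiplicity p such that every quotient A/Iⱼ is semisimple. Then A is hereditarily reflexive: every norm-closed linear subspace L ⊆ A is reflexive, i.e., any T ∈ B(X) with Tx ∈ closure(Lx) for all x ∈ X belongs to L. -/

import Mathlib

set_option synthInstance.maxHeartbeats 1000000
set_option maxHeartbeats 1000000
set_option synthInstance.maxHeartbeats 10000000
set_option maxHeartbeats 10000000

/-- The annihilator ideal `Iⱼ = {a ∈ A : a xⱼ = 0}` of a vector. -/
def annIdeal {X : Type*} [NormedAddCommGroup X] [NormedSpace ℂ X]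
    (A : Subalgebra ℂ (X →L[ℂ] X)) (x : X) : Ideal ↥A where
  carrier := {a | (a : X →L[ℂ] X) x = 0}
  add_mem' := fun {a b} ha hb => by
    simp only [Set.mem_setOf_eq] at *
    rw [Subalgebra.coe_add, ContinuousLinearMap.add_apply, ha, hb, add_zero]
  zero_mem' := by simp
  smul_mem' := fun c a ha => by
    simp only [Set.mem_setOf_eq, smul_eq_mul] at *
    rw [Subalgebra.coe_mul, ContinuousLinearMap.mul_apply, ha, map_zero]

open WeakDual in
/-- Every maximal ideal of a commutative complex Banach algebra admits a character
vanishing exactly on it, packaged typeclass-free. -/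
lemma exists_char_aux {B : Type*} [NormedCommRing B] [NormedAlgebra ℂ B] [CompleteSpace B]
    (M : Ideal B) (hM : M.IsMaximal) :
    ∃ χ : B → ℂ, (∀ a b, χ (a + b) = χ a + χ b) ∧ (∀ (c : ℂ) a, χ (c • a) = c * χ a) ∧
      (∀ a b, χ (a * b) = χ a * χ b) ∧ χ 1 = 1 ∧
      (∀ a, ‖χ a‖ ≤ ‖a‖ * ‖(1 : B)‖) ∧ (∀ c ∈ M, χ c = 0) ∧
      (∀ c, χ c = 0 → c ∈ M) := by
  haveI := hM
  refine ⟨M.toCharacterSpace, fun a b => map_add _ a b, fun c a => by rw [map_smul]; rfl,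
    fun a b => map_mul _ a b, map_one _,
    fun a => spectrum.norm_le_norm_mul_of_mem
      (WeakDual.CharacterSpace.apply_mem_spectrum _ a),
    fun c hc => M.toCharacterSpace_apply_eq_zero_of_mem hc, ?_⟩
  intro c hc
  by_contra hcM
  obtain ⟨b, i, hiM, hbi⟩ := hM.exists_inv hcM
  have h1 : M.toCharacterSpace (b * c + i) = 1 := by rw [hbi, map_one]
  rw [map_add, map_mul, hc, mul_zero, zero_add,
    M.toCharacterSpace_apply_eq_zero_of_mem hiM] at h1
  exact zero_ne_one h1

/-- Let `A ⊆ B(X)` be abelian, unital, semisimple, strongly closed, of split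
strict multiplicity `p`, with every quotient `A/Iⱼ` semisimple. Then `A` is
hereditarily reflexive: every norm-closed subspace `L ⊆ A` is reflexive. -/
theorem stmt13 {X : Type*} [NormedAddCommGroup X] [NormedSpace ℂ X] [CompleteSpace X]
    (A : Subalgebra ℂ (X →L[ℂ] X))
    (hSOT : ∀ T : X →L[ℂ] X,
      (T : X → X) ∈ closure ((fun a : X →L[ℂ] X => (a : X → X)) '' (A : Set (X →L[ℂ] X)))
      → T ∈ A)
    (hcomm : ∀ a ∈ A, ∀ b ∈ A, a * b = b * a)
    (hsemisimple : ∀ c : ↥A, (∀ M : Ideal ↥A, M.IsMaximal → c ∈ M) → c = 0)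
    (p : ℕ) (x : Fin p → X)
    (hc : ∀ j, IsClosed {y : X | ∃ a ∈ A, a (x j) = y})
    (hspan : ∀ y : X, ∃ f : Fin p → (X →L[ℂ] X), (∀ j, f j ∈ A) ∧ y = ∑ j, f j (x j))
    (hind : ∀ f : Fin p → (X →L[ℂ] X), (∀ j, f j ∈ A) →
      (∑ j, f j (x j)) = 0 → ∀ j, f j (x j) = 0)
    (hss : ∀ j, ∀ c : ↥A,
      (∀ M : Ideal ↥A, M.IsMaximal → annIdeal A (x j) ≤ M → c ∈ M) →
      c ∈ annIdeal A (x j)) :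
    ∀ L : Submodule ℂ (X →L[ℂ] X),
      (L : Set (X →L[ℂ] X)) ⊆ (A : Set (X →L[ℂ] X)) →
      IsClosed (L : Set (X →L[ℂ] X)) →
      ∀ T : X →L[ℂ] X, (∀ y : X, T y ∈ closure {z : X | ∃ l ∈ L, l y = z}) → T ∈ L := by
  intro L hLA hLclosed T hT
  classical
  -- `A` is norm closed, hence a Banach algebra
  have hAclosed : IsClosed (A : Set (X →L[ℂ] X)) := by
    refine isClosed_of_closure_subset fun S hS => hSOT S ?_
    have hcont : Continuous fun f : X →L[ℂ] X => (f : X → X) :=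
      continuous_pi fun y => (ContinuousLinearMap.apply ℂ X y).continuous
    exact image_closure_subset_closure_image hcont ⟨S, hS, rfl⟩
  haveI : CompleteSpace ↥A := hAclosed.completeSpace_coe
  -- characters associated to maximal ideals of `A`
  have charA : ∀ M : Ideal ↥A, M.IsMaximal → ∃ χ : ↥A → ℂ,
      (∀ a b, χ (a + b) = χ a + χ b) ∧ (∀ (c : ℂ) a, χ (c • a) = c * χ a) ∧
      (∀ a b, χ (a * b) = χ a * χ b) ∧ χ 1 = 1 ∧
      (∀ a, ‖χ a‖ ≤ ‖a‖ * ‖(1 : ↥A)‖) ∧ (∀ c ∈ M, χ c = 0) ∧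
      (∀ c, χ c = 0 → c ∈ M) := by
    letI : NormedCommRing ↥A :=
      { toNormedRing := (inferInstance : NormedRing ↥A),
        mul_comm := fun a b => Subtype.ext (hcomm a a.2 b b.2) }
    exact fun M hM => exists_char_aux M hM
  -- evaluation maps at the `x j`
  have φbound : ∀ (j : Fin p) (a : ↥A), ‖(a : X →L[ℂ] X) (x j)‖ ≤ ‖x j‖ * ‖a‖ := fun j a => by
    calc ‖(a : X →L[ℂ] X) (x j)‖ ≤ ‖(a : X →L[ℂ] X)‖ * ‖x j‖ :=
          (a : X →L[ℂ] X).le_opNorm _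
      _ = ‖x j‖ * ‖a‖ := mul_comm _ _
  let φ : Fin p → (↥A →L[ℂ] X) := fun j =>
    LinearMap.mkContinuous
      { toFun := fun a : ↥A => (a : X →L[ℂ] X) (x j)
        map_add' := fun a b => by simp
        map_smul' := fun c a => by simp }
      (‖x j‖) (φbound j)
  have φapp : ∀ j a, φ j a = (a : X →L[ℂ] X) (x j) := fun j a => rfl
  set Msub : Fin p → Submodule ℂ X := fun j => LinearMap.range (φ j : ↥A →ₗ[ℂ] X) with hMsub
  have hMmem : ∀ j (a : ↥A), (a : X →L[ℂ] X) (x j) ∈ Msub j := fun j a => ⟨a, rfl⟩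
  have hMclosed : ∀ j, IsClosed (Msub j : Set X) := by
    intro j
    have heq : (Msub j : Set X) = {y : X | ∃ a ∈ A, a (x j) = y} := by
      ext y
      constructor
      · rintro ⟨a, rfl⟩; exact ⟨a, a.2, rfl⟩
      · rintro ⟨a, haA, rfl⟩; exact ⟨⟨a, haA⟩, rfl⟩
    rw [heq]; exact hc j
  letI : ∀ j, CompleteSpace ↥(Msub j) := fun j => (hMclosed j).completeSpace_coe
  -- open mapping constants
  have hCex : ∀ j, ∃ C, 0 < C ∧ ∀ v : ↥(Msub j), ∃ a : ↥A,
      (a : X →L[ℂ] X) (x j) = (v : X) ∧ ‖a‖ ≤ C * ‖v‖ := by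
    intro j
    have hsurj : Function.Surjective
        (((φ j).codRestrict (Msub j) (fun a => ⟨a, rfl⟩)) : ↥A → ↥(Msub j)) := by
      rintro ⟨y, a, rfl⟩
      exact ⟨a, rfl⟩
    obtain ⟨Cj, hC0, hCj⟩ := ContinuousLinearMap.exists_preimage_norm_le _ hsurj
    refine ⟨Cj, hC0, fun v => ?_⟩
    obtain ⟨a, ha, hn⟩ := hCj v
    exact ⟨a, congrArg Subtype.val ha, hn⟩
  choose C Cpos hC using hCex
  -- the direct-sum isomorphism `⊕ⱼ A xⱼ ≃ X`
  let Φ : (∀ j, ↥(Msub j)) →L[ℂ] X := ∑ j, (Msub j).subtypeL.comp (ContinuousLinearMap.proj j)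
  have Φapp : ∀ v : ∀ j, ↥(Msub j), Φ v = ∑ j, ((v j : X)) := by
    intro v
    simp [Φ, ContinuousLinearMap.sum_apply]
  have hker : LinearMap.ker (Φ : (∀ j, ↥(Msub j)) →ₗ[ℂ] X) = ⊥ := by
    rw [LinearMap.ker_eq_bot']
    intro v hv
    rw [ContinuousLinearMap.coe_coe, Φapp] at hv
    choose a ha using fun j => (v j).2
    have h0 : (∑ j, ((a j : X →L[ℂ] X)) (x j)) = 0 := by
      rw [show (fun j => ((a j : X →L[ℂ] X)) (x j)) = fun j => ((v j : X)) from
        funext fun j => ha j]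
      exact hv
    have hz := hind (fun j => (a j : X →L[ℂ] X)) (fun j => (a j).2) h0
    funext j
    exact Subtype.ext (by rw [← ha j]; exact hz j)
  have hrange : LinearMap.range (Φ : (∀ j, ↥(Msub j)) →ₗ[ℂ] X) = ⊤ := by
    rw [LinearMap.range_eq_top]
    intro y
    obtain ⟨f, hfA, hfy⟩ := hspan y
    refine ⟨fun j => ⟨f j (x j), hMmem j ⟨f j, hfA j⟩⟩, ?_⟩
    rw [ContinuousLinearMap.coe_coe, Φapp, hfy]
  let e : (∀ j, ↥(Msub j)) ≃L[ℂ] X := ContinuousLinearEquiv.ofBijective Φ hker hrange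
  have happ : ∀ v : ∀ j, ↥(Msub j), e v = ∑ j, ((v j : X)) := fun v => Φapp v
  set Cp : ℝ := ‖(e.symm : X →L[ℂ] ∀ j, ↥(Msub j))‖ with hCpdef
  have hCp0 : 0 ≤ Cp := by
    rw [hCpdef]; exact norm_nonneg (e.symm : X →L[ℂ] ∀ j, ↥(Msub j))
  have hcomp : ∀ (y : X) (v : ∀ j, ↥(Msub j)), (∑ j, ((v j : X))) = y →
      ∀ j, ‖(v j : X)‖ ≤ Cp * ‖y‖ := by
    intro y v hv j
    have h1 : v = e.symm y := by
      have h2 : e v = y := by rw [happ, hv]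
      rw [← h2, ContinuousLinearEquiv.symm_apply_apply]
    calc ‖(v j : X)‖ = ‖v j‖ := rfl
      _ ≤ ‖v‖ := norm_le_pi_norm v j
      _ = ‖(e.symm : X →L[ℂ] ∀ j, ↥(Msub j)) y‖ := by rw [h1]; rfl
      _ ≤ Cp * ‖y‖ := (e.symm : X →L[ℂ] ∀ j, ↥(Msub j)).le_opNorm y
  -- `T` maps each `A xⱼ` into itself
  have hTmem : ∀ (j : Fin p) (f : ↥A), T ((f : X →L[ℂ] X) (x j)) ∈ Msub j := by
    intro j f
    have hsub : {z : X | ∃ l ∈ L, l ((f : X →L[ℂ] X) (x j)) = z} ⊆ (Msub j : Set X) := by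
      rintro z ⟨l, hl, rfl⟩
      have h1 : l ((f : X →L[ℂ] X) (x j)) = ((⟨l * (f : X →L[ℂ] X),
          A.mul_mem (hLA hl) f.2⟩ : ↥A) : X →L[ℂ] X) (x j) := rfl
      rw [h1]
      exact hMmem j _
    exact closure_minimal hsub (hMclosed j) (hT _)
  have hTx : ∀ j : Fin p, ∃ a : ↥A, (a : X →L[ℂ] X) (x j) = T (x j) := by
    intro j
    have h1 := hTmem j 1
    have h2 : ((1 : ↥A) : X →L[ℂ] X) (x j) = x j := by
      rw [Subalgebra.coe_one, ContinuousLinearMap.one_apply]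
    rw [h2] at h1
    exact h1
  choose b hb using hTx
  -- approximation of `T (f xⱼ)` by elements `(l f) xⱼ` with `l ∈ L`
  have hclosL : ∀ (j : Fin p) (f : ↥A) (ε : ℝ), 0 < ε → ∃ l : ↥A, (l : X →L[ℂ] X) ∈ L ∧
      ‖T ((f : X →L[ℂ] X) (x j)) - ((l * f : ↥A) : X →L[ℂ] X) (x j)‖ < ε := by
    intro j f ε hε
    obtain ⟨z, ⟨l, hl, hlz⟩, hdist⟩ :=
      Metric.mem_closure_iff.mp (hT ((f : X →L[ℂ] X) (x j))) ε hε
    refine ⟨⟨l, hLA hl⟩, hl, ?_⟩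
    have hz : ((⟨l, hLA hl⟩ * f : ↥A) : X →L[ℂ] X) (x j) = z := by
      rw [Subalgebra.coe_mul, ContinuousLinearMap.mul_apply]
      exact hlz
    rw [hz, ← dist_eq_norm]
    exact hdist
  -- multiplier property: `T (f xⱼ) = f (T xⱼ)`
  have hmult : ∀ (j : Fin p) (f : ↥A),
      T ((f : X →L[ℂ] X) (x j)) = (f : X →L[ℂ] X) (T (x j)) := by
    intro j f
    obtain ⟨g, hg⟩ := hTmem j f
    rw [ContinuousLinearMap.coe_coe, φapp] at hg
    -- the key vanishing lemma
    have key : ∀ (h g' : ↥A), (g' : X →L[ℂ] X) (x j) = T ((h : X →L[ℂ] X) (x j)) →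
        ∀ M : Ideal ↥A, annIdeal A (x j) ≤ M →
        ∀ χ : ↥A → ℂ, (∀ a b, χ (a + b) = χ a + χ b) →
        (∀ a b, χ (a * b) = χ a * χ b) →
        (∀ a, ‖χ a‖ ≤ ‖a‖ * ‖(1 : ↥A)‖) → (∀ c ∈ M, χ c = 0) →
        χ h = 0 → χ g' = 0 := by
      intro h g' hhg M hannM χ hadd hmulχ hboundχ hvanish hχh
      have hbnd : ∀ d : ↥A, ‖χ d‖ ≤ (C j * ‖(1 : ↥A)‖) * ‖(d : X →L[ℂ] X) (x j)‖ := by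
        intro d
        obtain ⟨a, ha, hna⟩ := hC j ⟨(d : X →L[ℂ] X) (x j), hMmem j d⟩
        have hda : d - a ∈ annIdeal A (x j) := by
          show ((d - a : ↥A) : X →L[ℂ] X) (x j) = 0
          rw [Subalgebra.coe_sub, ContinuousLinearMap.sub_apply, ha, sub_self]
        have hχd : χ d = χ a := by
          have h1 : χ (d - a) = 0 := hvanish _ (hannM hda)
          have h2 : χ d = χ (d - a) + χ a := by
            rw [← hadd]; congr 1; abel
          rw [h2, h1, zero_add]
        rw [hχd]
        calc ‖χ a‖ ≤ ‖a‖ * ‖(1 : ↥A)‖ := hboundχ a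
          _ ≤ (C j * ‖(d : X →L[ℂ] X) (x j)‖) * ‖(1 : ↥A)‖ :=
              mul_le_mul_of_nonneg_right hna (norm_nonneg _)
          _ = (C j * ‖(1 : ↥A)‖) * ‖(d : X →L[ℂ] X) (x j)‖ := by ring
      have hεb : ∀ ε : ℝ, 0 < ε → ‖χ g'‖ ≤ (C j * ‖(1 : ↥A)‖) * ε := by
        intro ε hε
        obtain ⟨l, hlL, hln⟩ := hclosL j h ε hε
        have hd : ((g' - l * h : ↥A) : X →L[ℂ] X) (x j)
            = T ((h : X →L[ℂ] X) (x j)) - ((l * h : ↥A) : X →L[ℂ] X) (x j) := by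
          rw [Subalgebra.coe_sub, ContinuousLinearMap.sub_apply, hhg]
        have hχg : χ g' = χ (g' - l * h) := by
          have h3 : χ (g' - l * h) + χ (l * h) = χ g' := by
            rw [← hadd]; congr 1; abel
          have h4 : χ (l * h) = χ l * χ h := hmulχ l h
          rw [← h3, h4, hχh, mul_zero, add_zero]
        rw [hχg]
        calc ‖χ (g' - l * h)‖
            ≤ (C j * ‖(1 : ↥A)‖) * ‖((g' - l * h : ↥A) : X →L[ℂ] X) (x j)‖ := hbnd _
          _ ≤ (C j * ‖(1 : ↥A)‖) * ε := by
              refine mul_le_mul_of_nonneg_left ?_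
                (mul_nonneg (Cpos j).le (norm_nonneg _))
              rw [hd]
              exact hln.le
      have h0 : ‖χ g'‖ ≤ 0 := by
        refine le_of_forall_pos_le_add fun δ hδ => ?_
        have hK0 : 0 ≤ C j * ‖(1 : ↥A)‖ := mul_nonneg (Cpos j).le (norm_nonneg _)
        have h5 := hεb (δ / (C j * ‖(1 : ↥A)‖ + 1)) (by positivity)
        have h6 : (C j * ‖(1 : ↥A)‖) * (δ / (C j * ‖(1 : ↥A)‖ + 1)) ≤ δ := by
          rw [mul_div_assoc']
          rw [div_le_iff₀ (by positivity)]
          nlinarith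
        linarith
      simpa using norm_le_zero_iff.mp h0
    -- now prove `g - f * b j ∈ annIdeal`
    have hann : g - f * b j ∈ annIdeal A (x j) := by
      apply hss j
      intro M hMmax hannM
      obtain ⟨χ, hadd, hsmulχ, hmulχ, honeχ, hboundχ, hvanish, hkerχ⟩ := charA M hMmax
      set f₀ : ↥A := f - χ f • 1 with hf₀def
      have hχf₀ : χ f₀ = 0 := by
        have h1 : χ f₀ + χ (χ f • 1) = χ f := by
          rw [← hadd]; congr 1; rw [hf₀def]; abel
        have h2 : χ (χ f • 1) = χ f := by rw [hsmulχ, honeχ, mul_one]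
        rw [h2] at h1
        linear_combination h1
      obtain ⟨g₀, hg₀⟩ := hTmem j f₀
      rw [ContinuousLinearMap.coe_coe, φapp] at hg₀
      have hχg₀ : χ g₀ = 0 := key f₀ g₀ hg₀ M hannM χ hadd hmulχ hboundχ hvanish hχf₀
      -- the relation `g xⱼ = g₀ xⱼ + χ f • (b j) xⱼ`
      have hfx : (f : X →L[ℂ] X) (x j) = (f₀ : X →L[ℂ] X) (x j) + χ f • x j := by
        rw [hf₀def, Subalgebra.coe_sub, Subalgebra.coe_smul, Subalgebra.coe_one]
        simp
      have hrel : g - (g₀ + χ f • b j) ∈ annIdeal A (x j) := by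
        show ((g - (g₀ + χ f • b j) : ↥A) : X →L[ℂ] X) (x j) = 0
        rw [Subalgebra.coe_sub, Subalgebra.coe_add, Subalgebra.coe_smul]
        simp only [ContinuousLinearMap.sub_apply, ContinuousLinearMap.add_apply,
          ContinuousLinearMap.smul_apply]
        rw [hg, hg₀, hb j, hfx, map_add, map_smul]
        abel
      have hχrel : χ (g - (g₀ + χ f • b j)) = 0 := hvanish _ (hannM hrel)
      have hχg : χ g = χ f * χ (b j) := by
        have h1 : χ (g - (g₀ + χ f • b j)) + χ (g₀ + χ f • b j) = χ g := by
          rw [← hadd]; congr 1; abel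
        rw [hχrel, zero_add, hadd, hχg₀, hsmulχ, zero_add] at h1
        exact h1.symm
      apply hkerχ
      have h2 : χ (g - f * b j) + χ (f * b j) = χ g := by
        rw [← hadd]; congr 1; abel
      rw [hmulχ] at h2
      linear_combination h2 + hχg
    have hgx : (g : X →L[ℂ] X) (x j) = ((f * b j : ↥A) : X →L[ℂ] X) (x j) := by
      have h1 : ((g - f * b j : ↥A) : X →L[ℂ] X) (x j) = 0 := hann
      rw [Subalgebra.coe_sub, ContinuousLinearMap.sub_apply, sub_eq_zero] at h1
      exact h1
    rw [← hg, hgx, Subalgebra.coe_mul, ContinuousLinearMap.mul_apply, hb j]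
  -- final approximation argument
  set K : ℝ := (∑ j, C j) * (Cp * Cp) with hKdef
  have hK0 : 0 ≤ K := by
    rw [hKdef]
    exact mul_nonneg (Finset.sum_nonneg fun j _ => (Cpos j).le) (mul_nonneg hCp0 hCp0)
  have hTcl : T ∈ closure (L : Set (X →L[ℂ] X)) := by
    rw [Metric.mem_closure_iff]
    intro ε hε
    set δ : ℝ := ε / (K + 1) with hδdef
    have hδ : 0 < δ := by rw [hδdef]; positivity
    obtain ⟨z, ⟨l, hlL, hlz⟩, hdist⟩ :=
      Metric.mem_closure_iff.mp (hT (∑ j, x j)) δ hδ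
    have hlA : l ∈ A := hLA hlL
    have hwmem : ∀ j, T (x j) - l (x j) ∈ Msub j := by
      intro j
      refine sub_mem ?_ (hMmem j ⟨l, hlA⟩)
      rw [← hb j]
      exact hMmem j (b j)
    set w : ∀ j, ↥(Msub j) := fun j => ⟨T (x j) - l (x j), hwmem j⟩ with hwdef
    have hwsum : (∑ j, ((w j : X))) = T (∑ j, x j) - l (∑ j, x j) := by
      rw [map_sum, map_sum, ← Finset.sum_sub_distrib]
    have hwnorm : ∀ j, ‖(w j : X)‖ ≤ Cp * δ := by
      intro j
      calc ‖(w j : X)‖ ≤ Cp * ‖T (∑ j, x j) - l (∑ j, x j)‖ := hcomp _ w hwsum j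
        _ ≤ Cp * δ := by
            refine mul_le_mul_of_nonneg_left ?_ hCp0
            rw [← hlz] at hdist
            rw [← dist_eq_norm]
            exact hdist.le
    choose cc hcc1 hcc2 using fun j => hC j (w j)
    have hccn : ∀ j, ‖cc j‖ ≤ C j * (Cp * δ) := by
      intro j
      refine le_trans (hcc2 j) (mul_le_mul_of_nonneg_left ?_ (Cpos j).le)
      exact hwnorm j
    have hop : ∀ zz : X, ‖(T - l) zz‖ ≤ K * δ * ‖zz‖ := by
      intro zz
      obtain ⟨f, hfA, hfz⟩ := hspan zz
      have hterm : ∀ j, T (f j (x j)) - l (f j (x j)) = (cc j : X →L[ℂ] X) (f j (x j)) := by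
        intro j
        have h1 : T (f j (x j)) = f j (T (x j)) := hmult j ⟨f j, hfA j⟩
        have h2 : l (f j (x j)) = f j (l (x j)) := by
          have h3 := hcomm l hlA (f j) (hfA j)
          calc l (f j (x j)) = (l * f j) (x j) := rfl
            _ = (f j * l) (x j) := by rw [h3]
            _ = f j (l (x j)) := rfl
        have h4 : (cc j : X →L[ℂ] X) (x j) = T (x j) - l (x j) := hcc1 j
        have h5 := hcomm (f j) (hfA j) (cc j : X →L[ℂ] X) (cc j).2
        calc T (f j (x j)) - l (f j (x j)) = f j (T (x j)) - f j (l (x j)) := by rw [h1, h2]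
          _ = f j (T (x j) - l (x j)) := by rw [map_sub]
          _ = f j ((cc j : X →L[ℂ] X) (x j)) := by rw [h4]
          _ = (f j * (cc j : X →L[ℂ] X)) (x j) := rfl
          _ = ((cc j : X →L[ℂ] X) * f j) (x j) := by rw [h5]
          _ = (cc j : X →L[ℂ] X) (f j (x j)) := rfl
      have hfnorm : ∀ j, ‖f j (x j)‖ ≤ Cp * ‖zz‖ := by
        intro j
        exact hcomp zz (fun i => ⟨f i (x i), hMmem i ⟨f i, hfA i⟩⟩) (by rw [← hfz]) j
      calc ‖(T - l) zz‖ = ‖∑ j, ((cc j : X →L[ℂ] X) (f j (x j)))‖ := by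
            rw [ContinuousLinearMap.sub_apply]
            congr 1
            rw [show zz = ∑ j, f j (x j) from hfz, map_sum, map_sum,
              ← Finset.sum_sub_distrib]
            exact Finset.sum_congr rfl fun j _ => hterm j
        _ ≤ ∑ j, ‖(cc j : X →L[ℂ] X) (f j (x j))‖ := norm_sum_le _ _
        _ ≤ ∑ j, (C j * (Cp * δ)) * (Cp * ‖zz‖) := by
            refine Finset.sum_le_sum fun j _ => ?_
            calc ‖(cc j : X →L[ℂ] X) (f j (x j))‖
                ≤ ‖(cc j : X →L[ℂ] X)‖ * ‖f j (x j)‖ :=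
                  (cc j : X →L[ℂ] X).le_opNorm _
              _ ≤ (C j * (Cp * δ)) * (Cp * ‖zz‖) := by
                  refine mul_le_mul (hccn j) (hfnorm j) (norm_nonneg _) ?_
                  exact mul_nonneg (Cpos j).le (mul_nonneg hCp0 hδ.le)
        _ = K * δ * ‖zz‖ := by
            rw [← Finset.sum_mul, ← Finset.sum_mul, hKdef]
            ring
    refine ⟨l, hlL, ?_⟩
    have hnorm : ‖T - l‖ ≤ K * δ :=
      ContinuousLinearMap.opNorm_le_bound _ (mul_nonneg hK0 hδ.le) hop
    rw [dist_eq_norm]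
    have hfin : K * δ < ε := by
      rw [hδdef, mul_div_assoc', div_lt_iff₀ (by positivity)]
      nlinarith
    exact lt_of_le_of_lt hnorm hfin
  rw [hLclosed.closure_eq] at hTcl
  exact hTcl
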